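/- The adjoint S_x^* of the left-shift operator S_x on the Filipović space H_w is given by (S_x^* g)(y) = g(0)(1 + ∫_0^{y∧x} 1/w(s) ds) + ∫_0^{(y−x)∨0} (w(s)/w(s+x)) g'(s) ds for all g ∈ H_w and y ≥ 0; i.e., ⟨S_x f, g⟩_w = ⟨f, S_x^* g⟩_w for all f, g ∈ H_w. -/

import Mathlib

open MeasureTheory Real Set

/-- A Filipović weight function: measurable, increasing on `[0,∞)`, `w(0)=1`,
`w ≥ 1`, and `∫_0^∞ 1/w < ∞`. -/
structure FiliWeight (w : ℝ → ℝ) : Prop where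
  meas : Measurable w
  mono : MonotoneOn w (Set.Ici 0)
  one_le : ∀ x, 0 ≤ x → 1 ≤ w x
  at_zero : w 0 = 1
  int_inv : MeasureTheory.IntegrableOn (fun s => (w s)⁻¹) (Set.Ioi 0)

/-- Membership of `h` (with weak derivative `h'`) in the Filipović space `H_w`:
`h` is absolutely continuous on `[0,∞)` with derivative `h'` and finite weighted energy. -/
structure FiliMem (w : ℝ → ℝ) (h h' : ℝ → ℝ) : Prop where
  meas_deriv : Measurable h'
  abs_cont : ∀ x, 0 ≤ x → h x = h 0 + ∫ s in (0:ℝ)..x, h' s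
  energy : MeasureTheory.IntegrableOn (fun y => (h' y)^2 * w y) (Set.Ioi 0)

/-- The inner product `⟨f,g⟩_w = f(0)g(0) + ∫_0^∞ f'(y)g'(y) w(y) dy` on `H_w`. -/
noncomputable def filiInner (w f g f' g' : ℝ → ℝ) : ℝ :=
  f 0 * g 0 + ∫ y in Set.Ioi (0:ℝ), f' y * g' y * w y

/-- The squared norm `‖f‖_w^2 = |f(0)|^2 + ∫_0^∞ |f'(y)|^2 w(y) dy` on `H_w`. -/
noncomputable def filiNormSq (w f f' : ℝ → ℝ) : ℝ :=
  (f 0)^2 + ∫ y in Set.Ioi (0:ℝ), (f' y)^2 * w y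

lemma shift_integrableOn {G : ℝ → ℝ} {x : ℝ} (h : IntegrableOn G (Ioi 0)) :
    IntegrableOn (fun y => G (y - x)) (Ioi x) := by
  have emb : MeasurableEmbedding (fun y : ℝ => y + x) :=
    (MeasurableEquiv.addRight x).measurableEmbedding
  have mp : MeasurePreserving (fun y : ℝ => y + x) volume volume :=
    measurePreserving_add_right volume x
  have hpre : (fun y : ℝ => y + x) ⁻¹' (Ioi x) = Ioi 0 := by
    ext y; simp
  have h2 := ((mp.restrict_preimage_emb emb (Ioi x)).integrable_comp_emb emb
    (g := fun y => G (y - x)))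
  rw [IntegrableOn, ← h2, hpre]
  simp [Function.comp_def]
  exact h

lemma shift_integral (φ : ℝ → ℝ) (x : ℝ) :
    ∫ y in Ioi x, φ y = ∫ y in Ioi (0:ℝ), φ (y + x) := by
  have emb : MeasurableEmbedding (fun y : ℝ => y + x) :=
    (MeasurableEquiv.addRight x).measurableEmbedding
  have mp : MeasurePreserving (fun y : ℝ => y + x) volume volume :=
    measurePreserving_add_right volume x
  have hpre : (fun y : ℝ => y + x) ⁻¹' (Ioi x) = Ioi 0 := by
    ext y; simp
  rw [← mp.setIntegral_preimage_emb emb φ (Ioi x), hpre]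

/-- the adjoint of the left-shift operator `S_x` on `H_w` is given by
`(S_x^* g)(y) = g(0)(1 + ∫_0^{y∧x} 1/w) + ∫_0^{(y−x)∨0} (w(s)/w(s+x)) g'(s) ds`
(with weak derivative `y ↦ g(0)/w(y)` for `y ≤ x` and `y ↦ (w(y−x)/w(y)) g'(y−x)` for `y > x`),
i.e. `⟨S_x f, g⟩_w = ⟨f, S_x^* g⟩_w` for all `f, g ∈ H_w`. -/
theorem statement3 (w : ℝ → ℝ) (hw : FiliWeight w) (x : ℝ) (hx : 0 ≤ x)
    (f f' g g' : ℝ → ℝ) (hf : FiliMem w f f') (hg : FiliMem w g g') :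
    filiInner w (fun y => f (y + x)) g (fun y => f' (y + x)) g'
      = filiInner w f
          (fun y => g 0 * (1 + ∫ s in (0:ℝ)..(min y x), (w s)⁻¹)
            + ∫ s in (0:ℝ)..(max (y - x) 0), (w s / w (s + x)) * g' s)
          f'
          (fun y => if y ≤ x then g 0 * (w y)⁻¹ else (w (y - x) / w y) * g' (y - x)) := by
  have hwpos : ∀ y, 0 ≤ y → 0 < w y := fun y hy => zero_lt_one.trans_le (hw.one_le y hy)
  -- value of the adjoint at 0
  have hval0 : (g 0 * (1 + ∫ s in (0:ℝ)..(min 0 x), (w s)⁻¹)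
      + ∫ s in (0:ℝ)..(max ((0:ℝ) - x) 0), (w s / w (s + x)) * g' s) = g 0 := by
    rw [min_eq_left hx, max_eq_right (by linarith : (0:ℝ) - x ≤ 0)]
    simp
  -- integrability of f' on Ioc 0 x
  have hf'int : IntegrableOn f' (Ioc 0 x) := by
    have h1 : IntegrableOn (fun y => (1 + (f' y)^2 * w y)/2) (Ioc 0 x) := by
      refine Integrable.div_const (Integrable.add ?_ ?_) 2
      · exact integrableOn_const measure_Ioc_lt_top.ne
      · exact hf.energy.mono_set Ioc_subset_Ioi_self
    refine h1.mono' hf.meas_deriv.aestronglyMeasurable.restrict ?_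
    filter_upwards [ae_restrict_mem measurableSet_Ioc] with y hy
    have hw1 := hw.one_le y hy.1.le
    have h2 : (f' y)^2 ≤ (f' y)^2 * w y := le_mul_of_one_le_right (sq_nonneg _) hw1
    rw [Real.norm_eq_abs]
    nlinarith [sq_nonneg (|f' y| - 1), sq_abs (f' y), abs_nonneg (f' y)]
  -- equality of integrand on Ioc 0 x
  have heq1 : EqOn
      (fun y => f' y * (if y ≤ x then g 0 * (w y)⁻¹ else (w (y - x) / w y) * g' (y - x)) * w y)
      (fun y => g 0 * f' y) (Ioc 0 x) := by
    intro y hy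
    have hwne : w y ≠ 0 := (hwpos y hy.1.le).ne'
    simp only [if_pos hy.2]
    field_simp
  -- equality of integrand on Ioi x
  have heq2 : EqOn
      (fun y => f' y * (if y ≤ x then g 0 * (w y)⁻¹ else (w (y - x) / w y) * g' (y - x)) * w y)
      (fun y => f' y * (g' (y - x) * w (y - x))) (Ioi x) := by
    intro y hy
    have hwne : w y ≠ 0 := (hwpos y (hx.trans hy.le)).ne'
    simp only [if_neg (not_le.2 (mem_Ioi.1 hy))]
    field_simp
  -- integrability on the two pieces
  have hI1 : IntegrableOn
      (fun y => f' y * (if y ≤ x then g 0 * (w y)⁻¹ else (w (y - x) / w y) * g' (y - x)) * w y)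
      (Ioc 0 x) :=
    IntegrableOn.congr_fun (hf'int.const_mul (g 0)) heq1.symm measurableSet_Ioc
  have hI2 : IntegrableOn
      (fun y => f' y * (if y ≤ x then g 0 * (w y)⁻¹ else (w (y - x) / w y) * g' (y - x)) * w y)
      (Ioi x) := by
    refine IntegrableOn.congr_fun ?_ heq2.symm measurableSet_Ioi
    have hdom : IntegrableOn
        (fun y => ((f' y)^2 * w y + (g' (y - x))^2 * w (y - x))/2) (Ioi x) :=
      ((hf.energy.mono_set (Ioi_subset_Ioi hx)).add (shift_integrableOn hg.energy)).div_const 2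
    refine hdom.mono' ?_ ?_
    · exact (hf.meas_deriv.mul ((hg.meas_deriv.comp (measurable_id.sub measurable_const)).mul
        (hw.meas.comp (measurable_id.sub measurable_const)))).aestronglyMeasurable.restrict
    · filter_upwards [ae_restrict_mem measurableSet_Ioi] with y hy
      have hyx : (0:ℝ) ≤ y - x := by simp only [mem_Ioi] at hy; linarith
      have hu0 : 0 ≤ w (y - x) := (hwpos _ hyx).le
      have huv : w (y - x) ≤ w y := hw.mono hyx (hx.trans (le_of_lt hy)) (by linarith)
      have h1 : 2*(|f' y| * |g' (y - x)|) ≤ (f' y)^2 + (g' (y - x))^2 := by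
        nlinarith [sq_nonneg (|f' y| - |g' (y - x)|), sq_abs (f' y), sq_abs (g' (y - x))]
      have h2 := mul_le_mul_of_nonneg_right h1 hu0
      have h3 := mul_le_mul_of_nonneg_left huv (sq_nonneg (f' y))
      rw [Real.norm_eq_abs, abs_mul, abs_mul, abs_of_nonneg hu0]
      nlinarith
  -- splitting the integral
  have hsplit : (∫ y in Ioi (0:ℝ),
        f' y * (if y ≤ x then g 0 * (w y)⁻¹ else (w (y - x) / w y) * g' (y - x)) * w y)
      = (∫ y in Ioc 0 x,
          f' y * (if y ≤ x then g 0 * (w y)⁻¹ else (w (y - x) / w y) * g' (y - x)) * w y)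
        + ∫ y in Ioi x,
            f' y * (if y ≤ x then g 0 * (w y)⁻¹ else (w (y - x) / w y) * g' (y - x)) * w y := by
    rw [← Ioc_union_Ioi_eq_Ioi hx]
    exact setIntegral_union (Ioc_disjoint_Ioi le_rfl) measurableSet_Ioi hI1 hI2
  -- first piece
  have hp1 : (∫ y in Ioc 0 x,
        f' y * (if y ≤ x then g 0 * (w y)⁻¹ else (w (y - x) / w y) * g' (y - x)) * w y)
      = g 0 * (f x - f 0) := by
    rw [setIntegral_congr_fun measurableSet_Ioc heq1, integral_const_mul]
    have h4 := hf.abs_cont x hx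
    rw [intervalIntegral.integral_of_le hx] at h4
    rw [show (∫ y in Ioc 0 x, f' y) = f x - f 0 by linarith]
  -- second piece
  have hp2 : (∫ y in Ioi x,
        f' y * (if y ≤ x then g 0 * (w y)⁻¹ else (w (y - x) / w y) * g' (y - x)) * w y)
      = ∫ y in Ioi (0:ℝ), f' (y + x) * g' y * w y := by
    rw [setIntegral_congr_fun measurableSet_Ioi heq2, shift_integral]
    simp [mul_assoc]
  simp only [filiInner]
  rw [hval0, hsplit, hp1, hp2, zero_add]
  ring
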